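/- arXiv:cs/0506083 — 7 statements merged into one kernel-verified Lean document; each statement's English description precedes it below -/
import Mathlib

section
/- Let n ≥ 1, let X be a random binary vector of length n with an arbitrary distribution on a finite set, and let Y(ε) be obtained by passing each coordinate of X independently through a binary erasure channel with erasure probability ε. Then the normalized conditional entropy satisfies H(X | Y(1))/n = ∫₀¹ (1/n) Σ_{i=1}^n H(X_i | Y_{∼i}(ε)) dε, where Y_{∼i} denotes all outputs except the i-th. -/
open Finset

/-- Entropy of the marginal distribution of the bits indexed by `T`,
for a random binary vector of length `n` with pmf `p` (natural-log entropy). -/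
noncomputable def margEnt (n : ℕ) (p : (Fin n → Bool) → ℝ) (T : Finset (Fin n)) : ℝ :=
  ∑ f : {i // i ∈ T} → Bool,
    Real.negMulLog (∑ x : Fin n → Bool, if (∀ i : {i // i ∈ T}, x i.1 = f i) then p x else 0)

/-- Conditional entropy `H(X | Y(ε))` for transmission of `X ~ p` over `BEC(ε)`:
average over erasure patterns `S` (the erased positions) of `H(X | X_{Sᶜ})`. -/
noncomputable def condH (n : ℕ) (p : (Fin n → Bool) → ℝ) (ε : ℝ) : ℝ :=
  ∑ S : Finset (Fin n),
    ε ^ S.card * (1 - ε) ^ (n - S.card) * (margEnt n p Finset.univ - margEnt n p Sᶜ)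

/-- Extrinsic bit entropy `H(X_i | Y_{∼i}(ε))`: average over erasure patterns `S`
among the positions other than `i` of `H(X_i | X_K)` where `K` is the set of
known (unerased) positions other than `i`. -/
noncomputable def exitBit (n : ℕ) (p : (Fin n → Bool) → ℝ) (i : Fin n) (ε : ℝ) : ℝ :=
  ∑ S ∈ (Finset.univ.erase i).powerset,
    ε ^ S.card * (1 - ε) ^ (n - 1 - S.card) *
      (margEnt n p (insert i ((Finset.univ.erase i) \ S)) -
        margEnt n p ((Finset.univ.erase i) \ S))

lemma beta_nat (a b : ℕ) :
    ∫ x in (0:ℝ)..1, x ^ a * (1 - x) ^ b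
      = (a.factorial * b.factorial : ℝ) / (a + b + 1).factorial := by
  induction b generalizing a with
  | zero =>
    simp only [pow_zero, mul_one, integral_pow, Nat.factorial_zero, Nat.cast_one]
    have : ((a+0+1).factorial : ℝ) = (a+1) * a.factorial := by
      push_cast [Nat.factorial_succ]; ring
    rw [this]
    have ha : (a.factorial : ℝ) ≠ 0 := by positivity
    field_simp
    simp
  | succ b ih =>
    have key : ∀ x : ℝ, HasDerivAt (fun x : ℝ => x ^ (a+1) * (1 - x) ^ (b+1))
        ((a+1 : ℝ) * x ^ a * (1 - x) ^ (b+1) - (b+1 : ℝ) * (x ^ (a+1) * (1 - x) ^ b)) x := by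
      intro x
      have h1 : HasDerivAt (fun x : ℝ => x ^ (a+1)) ((a+1 : ℝ) * x ^ a) x := by
        simpa using (hasDerivAt_pow (a+1) x)
      have h2 : HasDerivAt (fun x : ℝ => (1 - x) ^ (b+1)) (-((b+1 : ℝ) * (1 - x) ^ b)) x := by
        have := ((hasDerivAt_pow (b+1) (1 - x)).comp x ((hasDerivAt_const x (1:ℝ)).sub (hasDerivAt_id x)))
        simpa [Function.comp_def] using this
      have := h1.mul h2
      refine HasDerivAt.congr_deriv this ?_
      push_cast
      ring
    have hint : ∫ x in (0:ℝ)..1, ((a+1 : ℝ) * x ^ a * (1 - x) ^ (b+1) - (b+1 : ℝ) * (x ^ (a+1) * (1 - x) ^ b)) = 0 := by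
      rw [intervalIntegral.integral_eq_sub_of_hasDerivAt (fun x _ => key x)]
      · norm_num
      · apply Continuous.intervalIntegrable; continuity
    rw [intervalIntegral.integral_sub (by apply Continuous.intervalIntegrable; continuity)
        (by apply Continuous.intervalIntegrable; continuity), sub_eq_zero] at hint
    simp only [mul_assoc] at hint
    rw [intervalIntegral.integral_const_mul, intervalIntegral.integral_const_mul] at hint
    · have ha : (a + 1 : ℝ) ≠ 0 := by positivity
      have : ∫ x in (0:ℝ)..1, x ^ a * (1 - x) ^ (b+1)
          = (b+1 : ℝ) / (a+1 : ℝ) * ∫ x in (0:ℝ)..1, x ^ (a+1) * (1 - x) ^ b := by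
        field_simp
        linarith [hint]
      rw [this, ih (a+1)]
      rw [Nat.factorial_succ a, Nat.factorial_succ b]
      have h2 : ((a + 1 + b + 1).factorial : ℝ) ≠ 0 := by positivity
      have h3 : ((a + (b+1) + 1)) = (a + 1 + b + 1) := by ring
      rw [h3]
      push_cast
      field_simp



lemma sum_identity (n : ℕ) (E : Finset (Fin n) → ℝ) (hE0 : E ∅ = 0) :
    ∑ i : Fin n, ∑ S ∈ (Finset.univ.erase i).powerset,
      ((S.card.factorial * (n - 1 - S.card).factorial : ℝ) / n.factorial) *
        (E (insert i ((Finset.univ.erase i) \ S)) - E ((Finset.univ.erase i) \ S))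
    = E Finset.univ := by
  have hcard_erase : ∀ i : Fin n, (Finset.univ.erase i).card = n - 1 := by
    intro i; rw [Finset.card_erase_of_mem (Finset.mem_univ i)]; simp
  set g : ℕ → ℝ := fun k => ((n - 1 - k).factorial * k.factorial : ℝ) / n.factorial with hg
  set w : ℕ → ℝ := fun k => ((n - k).factorial * k.factorial : ℝ) / n.factorial with hw
  -- Step 1: reindex S ↦ K = erase i \ S
  have step1 : ∀ i : Fin n,
      ∑ S ∈ (Finset.univ.erase i).powerset,
        ((S.card.factorial * (n - 1 - S.card).factorial : ℝ) / n.factorial) *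
          (E (insert i ((Finset.univ.erase i) \ S)) - E ((Finset.univ.erase i) \ S))
      = ∑ K ∈ (Finset.univ.erase i).powerset, g K.card * (E (insert i K) - E K) := by
    intro i
    apply Finset.sum_nbij' (fun S => (Finset.univ.erase i) \ S) (fun K => (Finset.univ.erase i) \ K)
    · intro S _; exact Finset.mem_powerset.2 Finset.sdiff_subset
    · intro K _; exact Finset.mem_powerset.2 Finset.sdiff_subset
    · intro S hS; exact Finset.sdiff_sdiff_eq_self (Finset.mem_powerset.1 hS)
    · intro K hK; exact Finset.sdiff_sdiff_eq_self (Finset.mem_powerset.1 hK)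
    · intro S hS
      have hsub : S ⊆ Finset.univ.erase i := Finset.mem_powerset.1 hS
      have hc : ((Finset.univ.erase i) \ S).card = n - 1 - S.card := by
        rw [Finset.card_sdiff_of_subset hsub, hcard_erase]
      have hle : S.card ≤ n - 1 := by
        calc S.card ≤ (Finset.univ.erase i).card := Finset.card_le_card hsub
        _ = n - 1 := hcard_erase i
      rw [hg]
      simp only [hc, Nat.sub_sub_self hle]
  rw [Finset.sum_congr rfl (fun i _ => step1 i)]
  -- Step 2: split into P and N
  have split : ∀ i : Fin n,
      ∑ K ∈ (Finset.univ.erase i).powerset, g K.card * (E (insert i K) - E K)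
      = (∑ K ∈ (Finset.univ.erase i).powerset, g K.card * E (insert i K))
        - ∑ K ∈ (Finset.univ.erase i).powerset, g K.card * E K := by
    intro i
    rw [← Finset.sum_sub_distrib]
    exact Finset.sum_congr rfl (fun K _ => by ring)
  rw [Finset.sum_congr rfl (fun i _ => split i), Finset.sum_sub_distrib]
  have hmem : ∀ (i : Fin n) (K : Finset (Fin n)),
      i ∈ Finset.univ ∧ K ∈ (Finset.univ.erase i).powerset
        ↔ i ∈ Kᶜ ∧ K ∈ Finset.univ.powerset := by
    intro i K
    simp [Finset.subset_erase]
  -- P computation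
  have hP : (∑ i : Fin n, ∑ K ∈ (Finset.univ.erase i).powerset, g K.card * E (insert i K))
      = ∑ A ∈ Finset.univ.powerset, w A.card * E A := by
    rw [Finset.sum_comm' hmem]
    have bij : (∑ K ∈ Finset.univ.powerset, ∑ i ∈ Kᶜ, g K.card * E (insert i K))
        = ∑ A ∈ Finset.univ.powerset, ∑ _i ∈ A, g (A.card - 1) * E A := by
      rw [Finset.sum_sigma', Finset.sum_sigma']
      apply Finset.sum_nbij' (fun x => ⟨insert x.2 x.1, x.2⟩) (fun x => ⟨x.1.erase x.2, x.2⟩)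
      · rintro ⟨K, i⟩ hx
        simp only [Finset.mem_sigma, Finset.mem_compl] at hx ⊢
        exact ⟨Finset.mem_powerset.2 (Finset.subset_univ _), Finset.mem_insert_self _ _⟩
      · rintro ⟨A, i⟩ hx
        simp only [Finset.mem_sigma, Finset.mem_compl] at hx ⊢
        exact ⟨Finset.mem_powerset.2 (Finset.subset_univ _), Finset.notMem_erase _ _⟩
      · rintro ⟨K, i⟩ hx
        simp only [Finset.mem_sigma, Finset.mem_compl] at hx
        simp [Finset.erase_insert hx.2]
      · rintro ⟨A, i⟩ hx
        simp only [Finset.mem_sigma] at hx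
        simp [Finset.insert_erase hx.2]
      · rintro ⟨K, i⟩ hx
        simp only [Finset.mem_sigma, Finset.mem_compl] at hx
        rw [Finset.card_insert_of_notMem hx.2]
        simp
    rw [bij]
    apply Finset.sum_congr rfl
    intro A _
    rw [Finset.sum_const, nsmul_eq_mul]
    rcases Finset.eq_empty_or_nonempty A with h | h
    · subst h; simp [hE0]
    · have hA1 : 1 ≤ A.card := Finset.card_pos.2 h
      have hAn : A.card ≤ n := by
        simpa using Finset.card_le_card (Finset.subset_univ A)
      have key : (A.card : ℝ) * g (A.card - 1) = w A.card := by
        rw [hg, hw]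
        beta_reduce
        have e1 : n - 1 - (A.card - 1) = n - A.card := by omega
        rw [e1]
        have e2 : (A.card.factorial : ℝ) = A.card * (A.card - 1).factorial := by
          rw [← Nat.mul_factorial_pred (by omega)]; push_cast; ring
        simp only [e2]; ring
      rw [← key]; ring
  -- N computation
  have hN : (∑ i : Fin n, ∑ K ∈ (Finset.univ.erase i).powerset, g K.card * E K)
      = (∑ A ∈ Finset.univ.powerset, w A.card * E A) - E Finset.univ := by
    rw [Finset.sum_comm' hmem]
    have inner : ∀ K : Finset (Fin n), (∑ _i ∈ Kᶜ, g K.card * E K)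
        = ((n - K.card : ℕ) : ℝ) * (g K.card * E K) := by
      intro K
      rw [Finset.sum_const, nsmul_eq_mul, Finset.card_compl, Fintype.card_fin]
    rw [Finset.sum_congr rfl (fun K _ => inner K), eq_sub_iff_add_eq]
    have perA : ∀ A : Finset (Fin n),
        w A.card * E A
        = ((n - A.card : ℕ) : ℝ) * (g A.card * E A) + (if A = Finset.univ then E Finset.univ else 0) := by
      intro A
      have hAn : A.card ≤ n := by simpa using Finset.card_le_card (Finset.subset_univ A)
      by_cases hA : A = Finset.univ
      · subst hA
        have hfz : (n.factorial : ℝ) ≠ 0 := Nat.cast_ne_zero.2 n.factorial_ne_zero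
        simp only [hw, Finset.card_univ, Fintype.card_fin, Nat.sub_self, if_pos]
        norm_num [Nat.factorial_zero, div_self hfz]
      · have hlt : A.card < n := by
          rcases lt_or_eq_of_le hAn with h | h
          · exact h
          · exact absurd (Finset.card_eq_iff_eq_univ A |>.1 (by simp [h, Fintype.card_fin])) hA
        rw [if_neg hA, add_zero, hw, hg]
        beta_reduce
        have e1 : ((n - A.card).factorial : ℝ)
            = (n - A.card : ℕ) * ((n - 1 - A.card).factorial : ℝ) := by
          have e : n - 1 - A.card = (n - A.card) - 1 := by omega
          rw [e, ← Nat.mul_factorial_pred (by omega)]; push_cast; ring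
        rw [e1]; ring
    rw [Finset.sum_congr rfl (fun A _ => perA A), Finset.sum_add_distrib,
      Finset.sum_ite_eq' Finset.univ.powerset Finset.univ (fun _ => E Finset.univ),
      if_pos (Finset.mem_powerset.2 (le_refl _))]
  rw [hP, hN]
  ring

lemma margEnt_empty (n : ℕ) (p : (Fin n → Bool) → ℝ) (hp1 : ∑ x, p x = 1) :
    margEnt n p (∅ : Finset (Fin n)) = 0 := by
  unfold margEnt
  have h1 : ∀ f : {i // i ∈ (∅ : Finset (Fin n))} → Bool,
      (∑ x : Fin n → Bool, if (∀ i : {i // i ∈ (∅ : Finset (Fin n))}, x i.1 = f i)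
        then p x else 0) = 1 := by
    intro f
    have : ∀ x : Fin n → Bool, (∀ i : {i // i ∈ (∅ : Finset (Fin n))}, x i.1 = f i) := by
      intro x i
      exact absurd i.2 (Finset.notMem_empty _)
    rw [Finset.sum_congr rfl (fun x _ => if_pos (this x))]
    exact hp1
  rw [Finset.sum_congr rfl (fun f _ => by rw [h1 f])]
  simp

lemma condH_one (n : ℕ) (p : (Fin n → Bool) → ℝ) (hp1 : ∑ x, p x = 1) :
    condH n p 1 = margEnt n p Finset.univ := by
  unfold condH
  rw [Finset.sum_eq_single Finset.univ]
  · rw [Finset.card_univ, Fintype.card_fin, Nat.sub_self, pow_zero, one_pow, one_mul, one_mul,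
      Finset.compl_univ, margEnt_empty n p hp1, sub_zero]
  · intro S _ hS
    have hlt : S.card < n := by
      have := Finset.card_lt_card (Finset.ssubset_univ_iff.2 hS)
      simpa using this
    rw [sub_self, zero_pow (by omega), mul_zero, zero_mul]
  · intro h; exact absurd (Finset.mem_univ _) h


lemma exitBit_integral (n : ℕ) (hn : 1 ≤ n) (p : (Fin n → Bool) → ℝ) (i : Fin n) :
    ∫ ε in (0:ℝ)..1, exitBit n p i ε
      = ∑ S ∈ (Finset.univ.erase i).powerset,
        ((S.card.factorial * (n - 1 - S.card).factorial : ℝ) / n.factorial) *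
          (margEnt n p (insert i ((Finset.univ.erase i) \ S)) -
            margEnt n p ((Finset.univ.erase i) \ S)) := by
  unfold exitBit
  rw [intervalIntegral.integral_finset_sum (fun S _ => by
    apply Continuous.intervalIntegrable; fun_prop)]
  apply Finset.sum_congr rfl
  intro S hS
  have hle : S.card ≤ n - 1 := by
    have := Finset.card_le_card (Finset.mem_powerset.1 hS)
    rwa [Finset.card_erase_of_mem (Finset.mem_univ i), Finset.card_univ, Fintype.card_fin] at this
  rw [intervalIntegral.integral_mul_const, beta_nat]
  have he : S.card + (n - 1 - S.card) + 1 = n := by omega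
  rw [he]

lemma exitBit_continuous (n : ℕ) (p : (Fin n → Bool) → ℝ) (i : Fin n) :
    Continuous (fun ε => exitBit n p i ε) := by
  unfold exitBit
  apply continuous_finset_sum
  intro S _
  fun_prop

/-- **Area Theorem for the BEC**: `H(X | Y(1))/n = ∫₀¹ (1/n) ∑ᵢ H(Xᵢ | Y_{∼i}(ε)) dε`. -/
theorem bec_area_theorem (n : ℕ) (hn : 1 ≤ n) (p : (Fin n → Bool) → ℝ)
    (hp : ∀ x, 0 ≤ p x) (hp1 : ∑ x, p x = 1) :
    condH n p 1 / n = ∫ ε in (0:ℝ)..1, (1 / (n : ℝ)) * ∑ i : Fin n, exitBit n p i ε := by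
  rw [condH_one n p hp1, intervalIntegral.integral_const_mul,
    intervalIntegral.integral_finset_sum
      (fun i _ => (exitBit_continuous n p i).intervalIntegrable 0 1),
    Finset.sum_congr rfl (fun i _ => exitBit_integral n hn p i),
    sum_identity n (margEnt n p) (margEnt_empty n p hp1)]
  ring
end

section
/- For integers l ≥ 3 and r ≥ 3, define W(x) = 1 − (1−x)^{r−1} − (l−1)(r−1)(1−x)^{r−2} x for x ∈ [0,1]. Then W has exactly one root in the open interval (0,1). -/
private lemma g_hasDeriv (c : ℝ) (n : ℕ) (u : ℝ) :
    HasDerivAt (fun u : ℝ => c * u ^ n + (1 - c) * u ^ (n + 1))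
      (c * ((n : ℝ) * u ^ (n - 1)) + (1 - c) * (((n : ℝ) + 1) * u ^ n)) u := by
  have h := ((hasDerivAt_pow n u).const_mul c).add ((hasDerivAt_pow (n + 1) u).const_mul (1 - c))
  simp at h
  exact h

private lemma aux_unique (c : ℝ) (n : ℕ) (hn : 1 ≤ n) (hc : (n : ℝ) + 2 ≤ c) :
    ∃! u : ℝ, u ∈ Set.Ioo (0:ℝ) 1 ∧ c * u ^ n + (1 - c) * u ^ (n + 1) = 1 := by
  set g : ℝ → ℝ := fun u => c * u ^ n + (1 - c) * u ^ (n + 1) with hg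
  have hn1 : (1 : ℝ) ≤ (n : ℝ) := by exact_mod_cast hn
  have hc1 : (1 : ℝ) < c := by linarith
  have hD : (0 : ℝ) < (c - 1) * ((n : ℝ) + 1) := by nlinarith
  set t : ℝ := c * n / ((c - 1) * ((n : ℝ) + 1)) with ht
  have ht0 : 0 < t := div_pos (by nlinarith) hD
  have ht1 : t < 1 := by
    rw [div_lt_one hD]; nlinarith
  have hderiv : ∀ u : ℝ, HasDerivAt g (u ^ (n - 1) * (c * n - (c - 1) * ((n : ℝ) + 1) * u)) u := by
    intro u
    have h := g_hasDeriv c n u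
    convert h using 1
    have hpow : u ^ n = u ^ (n - 1) * u := by
      rw [← pow_succ]; congr 1; omega
    rw [hpow]; ring
  have hcont : Continuous g := by fun_prop
  have hmono : StrictMonoOn g (Set.Icc 0 t) := by
    apply strictMonoOn_of_deriv_pos (convex_Icc 0 t) hcont.continuousOn
    intro u hu
    rw [interior_Icc] at hu
    rw [(hderiv u).deriv]
    apply mul_pos (pow_pos hu.1 _)
    have : u * ((c - 1) * ((n : ℝ) + 1)) < c * n := (lt_div_iff₀ hD).mp hu.2
    nlinarith
  have hanti : StrictAntiOn g (Set.Icc t 1) := by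
    apply strictAntiOn_of_deriv_neg (convex_Icc t 1) hcont.continuousOn
    intro u hu
    rw [interior_Icc] at hu
    rw [(hderiv u).deriv]
    have hu0 : 0 < u := lt_trans ht0 hu.1
    apply mul_neg_of_pos_of_neg (pow_pos hu0 _)
    have : c * n < u * ((c - 1) * ((n : ℝ) + 1)) := (div_lt_iff₀ hD).mp hu.1
    nlinarith
  have hg0 : g 0 = 0 := by
    simp [hg, zero_pow (by omega : n ≠ 0)]
  have hg1 : g 1 = 1 := by simp [hg]
  have hgt : 1 < g t := by
    have := hanti ⟨le_refl t, le_of_lt ht1⟩ ⟨le_of_lt ht1, le_refl 1⟩ ht1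
    rw [hg1] at this; exact this
  -- existence
  have hiv : (1 : ℝ) ∈ Set.Ioo (g 0) (g t) := by
    rw [hg0]; exact ⟨one_pos, hgt⟩
  obtain ⟨u, hu, hgu⟩ := intermediate_value_Ioo (le_of_lt ht0) hcont.continuousOn hiv
  have hu01 : u ∈ Set.Ioo (0:ℝ) 1 := ⟨hu.1, lt_trans hu.2 ht1⟩
  -- uniqueness claim: any root in (0,1) is below t
  have key : ∀ v : ℝ, v ∈ Set.Ioo (0:ℝ) 1 → g v = 1 → v = u := by
    intro v hv hgv
    have hvt : v < t := by
      by_contra h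
      push_neg at h
      have := hanti ⟨h, le_of_lt hv.2⟩ ⟨le_of_lt ht1, le_refl 1⟩ hv.2
      rw [hg1, hgv] at this
      exact lt_irrefl 1 this
    exact hmono.injOn ⟨le_of_lt hv.1, le_of_lt hvt⟩ ⟨le_of_lt hu.1, le_of_lt hu.2⟩
      (by rw [hgv, hgu])
  exact ⟨u, ⟨hu01, hgu⟩, fun v hv => key v hv.1 hv.2⟩

/-- For integers `l ≥ 3`, `r ≥ 3`, the function
`W(x) = 1 − (1−x)^{r−1} − (l−1)(r−1)(1−x)^{r−2} x` has exactly one root in `(0,1)`. -/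
theorem W_unique_root (l r : ℕ) (hl : 3 ≤ l) (hr : 3 ≤ r) :
    ∃! x : ℝ, x ∈ Set.Ioo (0:ℝ) 1 ∧
      1 - (1 - x) ^ (r - 1) - ((l : ℝ) - 1) * ((r : ℝ) - 1) * (1 - x) ^ (r - 2) * x = 0 := by
  obtain ⟨k, rfl⟩ : ∃ k, l = k + 3 := ⟨l - 3, by omega⟩
  obtain ⟨m, rfl⟩ : ∃ m, r = m + 3 := ⟨r - 3, by omega⟩
  have h1 : (k : ℝ) + 3 - 1 = (k : ℝ) + 2 := by ring
  have h2 : (m : ℝ) + 3 - 1 = (m : ℝ) + 2 := by ring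
  have hexp1 : k + 3 - 1 = k + 2 := by omega
  have hexp2 : m + 3 - 1 = m + 2 := by omega
  have hexp3 : m + 3 - 2 = m + 1 := by omega
  set c : ℝ := ((k : ℝ) + 2) * ((m : ℝ) + 2) with hcdef
  have hc : ((m + 1 : ℕ) : ℝ) + 2 ≤ c := by
    push_cast
    nlinarith [Nat.cast_nonneg (α := ℝ) k, Nat.cast_nonneg (α := ℝ) m]
  obtain ⟨u, ⟨hu01, hgu⟩, huniq⟩ := aux_unique c (m + 1) (by omega) hc
  have hequiv : ∀ x : ℝ,
      (1 - (1 - x) ^ (m + 3 - 1) -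
        ((↑(k + 3) : ℝ) - 1) * ((↑(m + 3) : ℝ) - 1) * (1 - x) ^ (m + 3 - 2) * x = 0)
      ↔ c * (1 - x) ^ (m + 1) + (1 - c) * (1 - x) ^ (m + 1 + 1) = 1 := by
    intro x
    rw [hexp2, hexp3]
    push_cast
    simp only [hcdef]
    constructor <;> intro h <;> linear_combination -h
  refine ⟨1 - u, ⟨⟨by linarith [hu01.2], by linarith [hu01.1]⟩, ?_⟩, ?_⟩
  · rw [hequiv]
    simpa using hgu
  · rintro y ⟨hy, hyeq⟩
    rw [hequiv] at hyeq
    have := huniq (1 - y) ⟨⟨by linarith [hy.2], by linarith [hy.1]⟩, hyeq⟩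
    linarith
end

section
/- Let λ, ρ be edge-perspective degree distribution polynomials (nonnegative coefficients, λ(1)=ρ(1)=1, λ(0)=0). Define Λ'(1) = 1/∫₀¹λ, Γ'(1) = 1/∫₀¹ρ, Λ(u)=Λ'(1)∫₀ᵘλ, Γ(u)=Γ'(1)∫₀ᵘρ, and the trial entropy P_ε(x,y) = Λ'(1)·x·(1−y) − (Λ'(1)/Γ'(1))·[1 − Γ(1−x)] + ε·Λ(y). Then the partial derivatives satisfy ∂_x P_ε(x,y) = Λ'(1)·[1 − y − ρ(1−x)] and ∂_y P_ε(x,y) = Λ'(1)·[−x + ε·λ(y)]. Consequently (x,y) ∈ [0,1]² is a stationary point of P_ε if and only if it is a fixed point of density evolution: y = 1 − ρ(1−x) and x = ε·λ(y). -/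
open Polynomial

lemma poly_int_hasDerivAt (p : Polynomial ℝ) (u : ℝ) :
    HasDerivAt (fun v => ∫ t in (0:ℝ)..v, p.eval t) (p.eval u) u :=
  intervalIntegral.integral_hasDerivAt_right
    (p.continuous_aeval.intervalIntegrable _ _)
    p.continuous_aeval.aestronglyMeasurable.stronglyMeasurableAtFilter
    p.continuous_aeval.continuousAt

lemma poly_int_pos (p : Polynomial ℝ) (hc : ∀ k, 0 ≤ p.coeff k) (h1 : p.eval 1 = 1) :
    0 < ∫ t in (0:ℝ)..1, p.eval t := by
  have hp0 : p ≠ 0 := fun h => by simp [h] at h1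
  have hlead : 0 < p.coeff p.natDegree := lt_of_le_of_ne (hc _)
    (Ne.symm (mt Polynomial.leadingCoeff_eq_zero.mp hp0))
  refine intervalIntegral.intervalIntegral_pos_of_pos_on (p.continuous_aeval.intervalIntegrable _ _)
    (fun t ht => ?_) one_pos
  rw [p.eval_eq_sum_range]
  have hmem : p.natDegree ∈ Finset.range (p.natDegree + 1) := Finset.self_mem_range_succ _
  have hterm : 0 < p.coeff p.natDegree * t ^ p.natDegree :=
    mul_pos hlead (pow_pos ht.1 _)
  exact lt_of_lt_of_le hterm
    (Finset.single_le_sum (f := fun i => p.coeff i * t ^ i)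
      (fun i _ => mul_nonneg (hc i) (pow_nonneg ht.1.le _)) hmem)

/-- `Λ'(1) = 1/∫₀¹λ`. -/
noncomputable def meanInv (lam : Polynomial ℝ) : ℝ := 1 / ∫ t in (0:ℝ)..1, lam.eval t

/-- `Λ(u) = Λ'(1)·∫₀ᵘ λ`. -/
noncomputable def nodeDist (lam : Polynomial ℝ) (u : ℝ) : ℝ :=
  meanInv lam * ∫ t in (0:ℝ)..u, lam.eval t

/-- Trial entropy `P_ε(x,y) = Λ'(1)·x·(1−y) − (Λ'(1)/Γ'(1))·[1 − Γ(1−x)] + ε·Λ(y)`. -/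
noncomputable def trialEntropy (lam rho : Polynomial ℝ) (ε x y : ℝ) : ℝ :=
  meanInv lam * x * (1 - y) - (meanInv lam / meanInv rho) * (1 - nodeDist rho (1 - x)) +
    ε * nodeDist lam y

/-- The partial derivatives of the trial entropy are
`∂ₓP = Λ'(1)[1 − y − ρ(1−x)]` and `∂_yP = Λ'(1)[−x + ε·λ(y)]`; consequently a
point `(x,y) ∈ [0,1]²` is stationary iff it is a density-evolution fixed point. -/
theorem trial_entropy_stationary (lam rho : Polynomial ℝ)
    (hlc : ∀ k, 0 ≤ lam.coeff k) (hrc : ∀ k, 0 ≤ rho.coeff k)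
    (hl1 : lam.eval 1 = 1) (hr1 : rho.eval 1 = 1) (hl0 : lam.coeff 0 = 0)
    (hld : 1 ≤ lam.natDegree) (hrd : 1 ≤ rho.natDegree) :
    (∀ ε x y : ℝ,
      HasDerivAt (fun t => trialEntropy lam rho ε t y)
        (meanInv lam * (1 - y - rho.eval (1 - x))) x ∧
      HasDerivAt (fun t => trialEntropy lam rho ε x t)
        (meanInv lam * (-x + ε * lam.eval y)) y) ∧
    (∀ ε : ℝ, ∀ x ∈ Set.Icc (0:ℝ) 1, ∀ y ∈ Set.Icc (0:ℝ) 1,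
      ((meanInv lam * (1 - y - rho.eval (1 - x)) = 0 ∧
        meanInv lam * (-x + ε * lam.eval y) = 0) ↔
       (y = 1 - rho.eval (1 - x) ∧ x = ε * lam.eval y))) := by
  have hlpos := poly_int_pos lam hlc hl1
  have hrpos := poly_int_pos rho hrc hr1
  have hml : meanInv lam ≠ 0 := by
    simp only [meanInv]; positivity
  have hmr : meanInv rho ≠ 0 := by
    simp only [meanInv]; positivity
  constructor
  · intro ε x y
    constructor
    · have hA : HasDerivAt (fun t : ℝ => meanInv lam * t * (1 - y))
          (meanInv lam * (1 - y)) x := by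
        simpa using ((hasDerivAt_id x).const_mul (meanInv lam)).mul_const (1 - y)
      have hN : HasDerivAt (fun t : ℝ => nodeDist rho (1 - t))
          (meanInv rho * (rho.eval (1 - x) * (0 - 1))) x := by
        exact (((poly_int_hasDerivAt rho (1 - x)).comp x
          ((hasDerivAt_const x (1:ℝ)).sub (hasDerivAt_id x)))).const_mul (meanInv rho)
      have hB : HasDerivAt (fun t : ℝ => (meanInv lam / meanInv rho) * (1 - nodeDist rho (1 - t)))
          ((meanInv lam / meanInv rho) * (0 - meanInv rho * (rho.eval (1 - x) * (0 - 1)))) x :=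
        ((hasDerivAt_const x (1:ℝ)).sub hN).const_mul _
      have := (hA.sub hB).add_const (ε * nodeDist lam y)
      have heq : (fun t => trialEntropy lam rho ε t y) =
          fun t : ℝ => meanInv lam * t * (1 - y) -
            (meanInv lam / meanInv rho) * (1 - nodeDist rho (1 - t)) + ε * nodeDist lam y := rfl
      rw [heq]
      refine this.congr_deriv ?_
      field_simp
      ring
    · have hA : HasDerivAt (fun t : ℝ => meanInv lam * x * (1 - t))
          (meanInv lam * x * (0 - 1)) y :=
        ((hasDerivAt_const y (1:ℝ)).sub (hasDerivAt_id y)).const_mul _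
      have hB : HasDerivAt (fun t : ℝ => ε * nodeDist lam t)
          (ε * (meanInv lam * lam.eval y)) y :=
        ((poly_int_hasDerivAt lam y).const_mul (meanInv lam)).const_mul ε
      have := (hA.sub_const ((meanInv lam / meanInv rho) * (1 - nodeDist rho (1 - x)))).add hB
      have heq : (fun t => trialEntropy lam rho ε x t) =
          fun t : ℝ => meanInv lam * x * (1 - t) -
            (meanInv lam / meanInv rho) * (1 - nodeDist rho (1 - x)) + ε * nodeDist lam t := rfl
      rw [heq]
      refine this.congr_deriv ?_
      ring
  · intro ε x _ y _
    constructor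
    · rintro ⟨h1, h2⟩
      have e1 := (mul_eq_zero.mp h1).resolve_left hml
      have e2 := (mul_eq_zero.mp h2).resolve_left hml
      constructor <;> linarith
    · rintro ⟨h1, h2⟩
      constructor
      · rw [h1]; ring
      · rw [h2]; ring
end

section
/- Let λ, ρ be degree distributions, y(x) = 1−ρ(1−x), ε(x) = x/λ(y(x)), h^{EBP}(x) = Λ(y(x)). Then along the EBP curve, for any 0 < a ≤ b ≤ 1, ∫_a^b h^{EBP}(x) ε'(x) dx = P_{ε(b)}(b, y(b)) − P_{ε(a)}(a, y(a)), where P_ε is the trial entropy. Equivalently, d/dx [P_{ε(x)}(x, y(x))] = Λ(y(x)) · ε'(x). -/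
open Polynomial

/-- `y(x) = 1 − ρ(1−x)`. -/
noncomputable def Yfun (rho : Polynomial ℝ) (x : ℝ) : ℝ := 1 - rho.eval (1 - x)

/-- `ε(x) = x / λ(y(x))`. -/
noncomputable def epsFun (lam rho : Polynomial ℝ) (x : ℝ) : ℝ :=
  x / lam.eval (Yfun rho x)

/-- explicit formula for `ε'(x)` -/
noncomputable def gfun (lam rho : Polynomial ℝ) (x : ℝ) : ℝ :=
  (1 * lam.eval (Yfun rho x) -
      x * (lam.derivative.eval (Yfun rho x) * rho.derivative.eval (1 - x))) /
    lam.eval (Yfun rho x) ^ 2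

lemma eval_pos_aux (p : Polynomial ℝ) (hc : ∀ k, 0 ≤ p.coeff k) (hd : 1 ≤ p.natDegree)
    {t : ℝ} (ht : 0 < t) : 0 < p.eval t := by
  have hp0 : p ≠ 0 := by
    intro h; rw [h] at hd; simp at hd
  have hlead : 0 < p.coeff p.natDegree :=
    lt_of_le_of_ne (hc _) (Ne.symm fun hz => hp0 (Polynomial.leadingCoeff_eq_zero.mp hz))
  rw [eval_eq_sum_range]
  refine Finset.sum_pos' (fun i _ => mul_nonneg (hc i) (pow_nonneg ht.le i)) ?_
  exact ⟨p.natDegree, Finset.self_mem_range_succ _, mul_pos hlead (pow_pos ht _)⟩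

lemma eval_lt_one_aux (p : Polynomial ℝ) (hc : ∀ k, 0 ≤ p.coeff k) (h1 : p.eval 1 = 1)
    (hd : 1 ≤ p.natDegree) {t : ℝ} (ht0 : 0 ≤ t) (ht1 : t < 1) : p.eval t < 1 := by
  have hp0 : p ≠ 0 := by
    intro h; rw [h] at hd; simp at hd
  have hlead : 0 < p.coeff p.natDegree :=
    lt_of_le_of_ne (hc _) (Ne.symm fun hz => hp0 (Polynomial.leadingCoeff_eq_zero.mp hz))
  calc p.eval t < p.eval 1 := by
        rw [eval_eq_sum_range, eval_eq_sum_range]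
        refine Finset.sum_lt_sum (fun i _ => ?_)
          ⟨p.natDegree, Finset.self_mem_range_succ _, ?_⟩
        · exact mul_le_mul_of_nonneg_left (pow_le_pow_left₀ ht0 ht1.le i) (hc i)
        · refine mul_lt_mul_of_pos_left ?_ hlead
          calc t ^ p.natDegree < 1 := pow_lt_one₀ ht0 ht1 (by omega)
            _ = 1 ^ p.natDegree := (one_pow _).symm
    _ = 1 := h1

lemma hasDerivAt_nodeDist (p : Polynomial ℝ) (u : ℝ) :
    HasDerivAt (nodeDist p) (meanInv p * p.eval u) u := by
  have h : HasDerivAt (fun v => ∫ t in (0:ℝ)..v, p.eval t) (p.eval u) u :=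
    intervalIntegral.integral_hasDerivAt_right (p.continuous.intervalIntegrable _ _)
      (p.continuous.stronglyMeasurableAtFilter _ _) p.continuous.continuousAt
  exact h.const_mul (meanInv p)

lemma continuous_nodeDist (p : Polynomial ℝ) : Continuous (nodeDist p) := by
  have h : Differentiable ℝ (nodeDist p) := fun u => (hasDerivAt_nodeDist p u).differentiableAt
  exact h.continuous

lemma continuous_Yfun (rho : Polynomial ℝ) : Continuous (Yfun rho) :=
  continuous_const.sub (rho.continuous.comp (continuous_const.sub continuous_id))

lemma hasDerivAt_Yfun (rho : Polynomial ℝ) (x : ℝ) :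
    HasDerivAt (Yfun rho) (rho.derivative.eval (1 - x)) x := by
  have hneg : HasDerivAt (fun t : ℝ => 1 - t) (-1) x := by
    simpa using (hasDerivAt_id x).const_sub 1
  have hcomp : HasDerivAt (fun t => rho.eval (1 - t)) (rho.derivative.eval (1 - x) * -1) x :=
    (rho.hasDerivAt (1 - x)).comp x hneg
  have := hcomp.const_sub 1
  rw [show Yfun rho = fun t => 1 - rho.eval (1 - t) from rfl]
  simpa [Yfun] using this

lemma hasDerivAt_eps (lam rho : Polynomial ℝ) {x : ℝ}
    (h : lam.eval (Yfun rho x) ≠ 0) :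
    HasDerivAt (epsFun lam rho) (gfun lam rho x) x := by
  have hL : HasDerivAt (fun t => lam.eval (Yfun rho t))
      (lam.derivative.eval (Yfun rho x) * rho.derivative.eval (1 - x)) x :=
    (lam.hasDerivAt (Yfun rho x)).comp x (hasDerivAt_Yfun rho x)
  exact (hasDerivAt_id x).div hL h

lemma key_deriv (lam rho : Polynomial ℝ)
    (hr : meanInv rho ≠ 0) {x : ℝ} (h : lam.eval (Yfun rho x) ≠ 0) :
    HasDerivAt (fun t => trialEntropy lam rho (epsFun lam rho t) t (Yfun rho t))
      (nodeDist lam (Yfun rho x) * gfun lam rho x) x := by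
  have hneg : HasDerivAt (fun t : ℝ => 1 - t) (-1) x := by
    simpa using (hasDerivAt_id x).const_sub 1
  have hY := hasDerivAt_Yfun rho x
  have hE := hasDerivAt_eps lam rho h
  have hA : HasDerivAt (fun t => meanInv lam * t * (1 - Yfun rho t))
      (meanInv lam * 1 * (1 - Yfun rho x) +
        meanInv lam * x * -(rho.derivative.eval (1 - x))) x :=
    ((hasDerivAt_id x).const_mul (meanInv lam)).mul (hY.const_sub 1)
  have hR : HasDerivAt (fun t => nodeDist rho (1 - t))
      (meanInv rho * rho.eval (1 - x) * -1) x :=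
    (hasDerivAt_nodeDist rho (1 - x)).comp x hneg
  have hB : HasDerivAt (fun t => (meanInv lam / meanInv rho) * (1 - nodeDist rho (1 - t)))
      ((meanInv lam / meanInv rho) * -(meanInv rho * rho.eval (1 - x) * -1)) x :=
    (hR.const_sub 1).const_mul _
  have hN : HasDerivAt (fun t => nodeDist lam (Yfun rho t))
      (meanInv lam * lam.eval (Yfun rho x) * rho.derivative.eval (1 - x)) x :=
    (hasDerivAt_nodeDist lam (Yfun rho x)).comp x hY
  have hC := hE.mul hN
  have hF := (hA.sub hB).add hC
  have hfun : (fun t => meanInv lam * t * (1 - Yfun rho t) -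
      (meanInv lam / meanInv rho) * (1 - nodeDist rho (1 - t)) +
      epsFun lam rho t * nodeDist lam (Yfun rho t)) =
      fun t => trialEntropy lam rho (epsFun lam rho t) t (Yfun rho t) := by
    funext t; simp [trialEntropy]
  change HasDerivAt (fun t => meanInv lam * t * (1 - Yfun rho t) -
      (meanInv lam / meanInv rho) * (1 - nodeDist rho (1 - t)) +
      epsFun lam rho t * nodeDist lam (Yfun rho t)) _ x at hF
  rw [hfun] at hF
  have h1y : 1 - Yfun rho x = rho.eval (1 - x) := by simp [Yfun]
  have heps : epsFun lam rho x * lam.eval (Yfun rho x) = x := by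
    simp [epsFun, div_mul_cancel₀ _ h]
  have hε2 : epsFun lam rho x *
      (meanInv lam * lam.eval (Yfun rho x) * rho.derivative.eval (1 - x)) =
      meanInv lam * x * rho.derivative.eval (1 - x) := by
    have heq : epsFun lam rho x *
        (meanInv lam * lam.eval (Yfun rho x) * rho.derivative.eval (1 - x)) =
        (epsFun lam rho x * lam.eval (Yfun rho x)) *
          (meanInv lam * rho.derivative.eval (1 - x)) := by ring
    rw [heq, heps]; ring
  have hmr : meanInv lam / meanInv rho * -(meanInv rho * rho.eval (1 - x) * -1) =
      meanInv lam * rho.eval (1 - x) := by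
    field_simp
  rw [h1y, hε2, hmr] at hF
  convert hF using 1
  ring

/-- Along the EBP curve, `∫_a^b h^{EBP}(x) ε'(x) dx = P_{ε(b)}(b,y(b)) − P_{ε(a)}(a,y(a))`
for `0 < a ≤ b ≤ 1`; equivalently `d/dx P_{ε(x)}(x,y(x)) = Λ(y(x))·ε'(x)`. -/
theorem ebp_trial_entropy_integral (lam rho : Polynomial ℝ)
    (hlc : ∀ k, 0 ≤ lam.coeff k) (hrc : ∀ k, 0 ≤ rho.coeff k)
    (hl1 : lam.eval 1 = 1) (hr1 : rho.eval 1 = 1) (hl0 : lam.coeff 0 = 0)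
    (hld : 1 ≤ lam.natDegree) (hrd : 1 ≤ rho.natDegree) :
    (∀ a b : ℝ, 0 < a → a ≤ b → b ≤ 1 →
      (∫ x in a..b, nodeDist lam (Yfun rho x) * deriv (epsFun lam rho) x) =
        trialEntropy lam rho (epsFun lam rho b) b (Yfun rho b) -
          trialEntropy lam rho (epsFun lam rho a) a (Yfun rho a)) ∧
    (∀ x ∈ Set.Ioc (0:ℝ) 1,
      HasDerivAt (fun t => trialEntropy lam rho (epsFun lam rho t) t (Yfun rho t))
        (nodeDist lam (Yfun rho x) * deriv (epsFun lam rho) x) x) := by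
  -- meanInv rho ≠ 0
  have hrint : (0:ℝ) < ∫ t in (0:ℝ)..1, rho.eval t := by
    refine intervalIntegral.intervalIntegral_pos_of_pos_on
      (rho.continuous.intervalIntegrable _ _) (fun t ht => ?_) one_pos
    exact eval_pos_aux rho hrc hrd ht.1
  have hr : meanInv rho ≠ 0 := one_div_ne_zero (ne_of_gt hrint)
  -- positivity of λ(y(x)) on (0,1]
  have hLpos : ∀ x ∈ Set.Ioc (0:ℝ) 1, 0 < lam.eval (Yfun rho x) := by
    intro x hx
    have h1 : rho.eval (1 - x) < 1 :=
      eval_lt_one_aux rho hrc hr1 hrd (by linarith [hx.2]) (by linarith [hx.1])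
    exact eval_pos_aux lam hlc hld (by simp only [Yfun]; linarith)
  constructor
  · intro a b ha hab hb1
    have hsub : Set.uIcc a b ⊆ Set.Ioc 0 1 := by
      rw [Set.uIcc_of_le hab]
      exact fun x hx => ⟨lt_of_lt_of_le ha hx.1, le_trans hx.2 hb1⟩
    have hderiv : ∀ x ∈ Set.uIcc a b,
        HasDerivAt (fun t => trialEntropy lam rho (epsFun lam rho t) t (Yfun rho t))
          (nodeDist lam (Yfun rho x) * deriv (epsFun lam rho) x) x := by
      intro x hx
      have h := ne_of_gt (hLpos x (hsub hx))
      rw [(hasDerivAt_eps lam rho h).deriv]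
      exact key_deriv lam rho hr h
    have hint : IntervalIntegrable (fun x => nodeDist lam (Yfun rho x) * deriv (epsFun lam rho) x)
        MeasureTheory.volume a b := by
      have hcont : ContinuousOn (fun x => nodeDist lam (Yfun rho x) * gfun lam rho x)
          (Set.uIcc a b) := by
        refine (((continuous_nodeDist lam).comp (continuous_Yfun rho)).continuousOn).mul ?_
        refine ContinuousOn.div ?_ ?_ ?_
        · exact (continuous_const.mul (lam.continuous.comp (continuous_Yfun rho))).continuousOn
            |>.sub ((continuous_id.mul ((lam.derivative.continuous.comp
              (continuous_Yfun rho)).mul (rho.derivative.continuous.comp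
              (continuous_const.sub continuous_id)))).continuousOn)
        · exact ((lam.continuous.comp (continuous_Yfun rho)).pow 2).continuousOn
        · exact fun x hx => pow_ne_zero _ (ne_of_gt (hLpos x (hsub hx)))
      refine (hcont.congr ?_).intervalIntegrable
      intro x hx
      dsimp only
      rw [(hasDerivAt_eps lam rho (ne_of_gt (hLpos x (hsub hx)))).deriv]
    exact intervalIntegral.integral_eq_sub_of_hasDerivAt hderiv hint
  · intro x hx
    have h := ne_of_gt (hLpos x hx)
    rw [(hasDerivAt_eps lam rho h).deriv]
    exact key_deriv lam rho hr h
end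

section
/- Fix r ∈ (0,1). For the sequence of regular LDPC ensembles with degree pairs (l, l/(1−r)), the BP threshold ε^{BP}(l) := inf_{x ∈ (0,1]} x/(1−(1−x)^{l/(1−r)−1})^{l−1} tends to 0 as l → ∞. -/
open Filter

/-- For the sequence of `(l, l/(1−r))`-regular LDPC ensembles of fixed design
rate `r ∈ (0,1)`, the BP threshold
`ε^{BP}(l) = inf_{x ∈ (0,1]} x/(1−(1−x)^{l/(1−r)−1})^{l−1}` tends to `0` as `l → ∞`. -/
theorem regular_bp_threshold_tendsto_zero (r : ℝ) (hr : r ∈ Set.Ioo (0:ℝ) 1) :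
    Tendsto
      (fun l : ℕ =>
        sInf ((fun x : ℝ =>
          x / ((1 - (1 - x) ^ ((l : ℝ) / (1 - r) - 1)) ^ ((l : ℝ) - 1))) ''
            Set.Ioc 0 1))
      atTop (nhds 0) := by
  obtain ⟨hr0, hr1⟩ := hr
  set c : ℝ := 1 - r with hc
  have hc0 : 0 < c := by simp only [hc]; linarith
  have hc1 : c < 1 := by simp only [hc]; linarith
  -- a l := c * log l / l tends to 0
  have hlog : Tendsto (fun x : ℝ => Real.log x / x) atTop (nhds 0) :=
    Real.isLittleO_log_id_atTop.tendsto_div_nhds_zero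
  have ha : Tendsto (fun l : ℕ => c * (Real.log l / l)) atTop (nhds 0) := by
    simpa using ((hlog.comp tendsto_natCast_atTop_atTop).const_mul c)
  have hg : Tendsto (fun l : ℕ => Real.exp 4 * (c * (Real.log l / l))) atTop (nhds 0) := by
    simpa using ha.const_mul (Real.exp 4)
  refine tendsto_of_tendsto_of_tendsto_of_le_of_le' tendsto_const_nhds hg ?_ ?_
  · -- eventual lower bound by 0
    filter_upwards [eventually_ge_atTop 1] with l hl
    apply Real.sInf_nonneg
    rintro y ⟨x, ⟨hx0, hx1⟩, rfl⟩
    have hp : (0:ℝ) ≤ (l : ℝ) / c - 1 := by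
      have hl1 : (1:ℝ) ≤ (l:ℝ) := by exact_mod_cast hl
      have : (1:ℝ) ≤ (l:ℝ) / c := by
        rw [le_div_iff₀ hc0]; nlinarith
      linarith
    have hb1 : (1 - x) ^ ((l : ℝ) / c - 1) ≤ 1 :=
      Real.rpow_le_one (by linarith) (by linarith) hp
    exact div_nonneg hx0.le (Real.rpow_nonneg (by linarith) _)
  · -- eventual upper bound
    filter_upwards [eventually_ge_atTop 4,
      ha.eventually (eventually_le_nhds (by positivity : (0:ℝ) < Real.log 2))] with l hl4 ha2
    have hl4' : (4:ℝ) ≤ (l:ℝ) := by exact_mod_cast hl4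
    have hl0 : (0:ℝ) < (l:ℝ) := by linarith
    set a : ℝ := c * (Real.log l / l) with hadef
    have hloga : 0 < Real.log l := Real.log_pos (by linarith)
    have ha0 : 0 < a := by positivity
    set x : ℝ := 1 - Real.exp (-a) with hxdef
    have hx0 : 0 < x := by
      have : Real.exp (-a) < 1 := Real.exp_lt_one_iff.mpr (by linarith)
      simp only [hxdef]; linarith
    have hx1 : x ≤ 1 := by
      have := Real.exp_pos (-a); simp only [hxdef]; linarith
    have hxa : x ≤ a := by
      have := Real.add_one_le_exp (-a)
      simp only [hxdef]; linarith
    -- the exponent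
    set p : ℝ := (l : ℝ) / c - 1 with hpdef
    have hp0 : (0:ℝ) ≤ p := by
      have : (1:ℝ) ≤ (l:ℝ) / c := by rw [le_div_iff₀ hc0]; nlinarith
      simp only [hpdef]; linarith
    -- (1-x)^p = exp a / l
    have h1x : 1 - x = Real.exp (-a) := by simp [hxdef]
    have hap : -a * p = a - Real.log l := by
      have : a * ((l:ℝ) / c) = Real.log l := by
        field_simp [hadef]
        rw [hadef]; field_simp
      simp only [hpdef]; nlinarith
    have hpow : (1 - x) ^ p = Real.exp a / l := by
      rw [h1x, ← Real.exp_log (Real.exp_pos (-a)) ]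
      rw [Real.exp_log (Real.exp_pos (-a)), Real.rpow_def_of_pos (Real.exp_pos _),
        Real.log_exp, hap, Real.exp_sub, Real.exp_log hl0]
    have hea : Real.exp a ≤ 2 := by
      calc Real.exp a ≤ Real.exp (Real.log 2) := Real.exp_le_exp.mpr ha2
      _ = 2 := Real.exp_log (by norm_num)
    have hpow2 : (1 - x) ^ p ≤ 2 / l := by
      rw [hpow]; gcongr
    have h2l : (0:ℝ) < 1 - 2 / (l:ℝ) := by
      have : 2 / (l:ℝ) ≤ 2 / 4 := by
        apply div_le_div_of_nonneg_left (by norm_num) (by norm_num) hl4'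
      linarith
    -- denominator lower bound
    have hD1 : (1 - 2 / (l:ℝ)) ^ ((l:ℝ) - 1) ≤ (1 - (1 - x) ^ p) ^ ((l:ℝ) - 1) := by
      apply Real.rpow_le_rpow h2l.le (by linarith) (by linarith)
    have hD2 : Real.exp (-4) ≤ (1 - 2 / (l:ℝ)) ^ ((l:ℝ) - 1) := by
      rw [Real.rpow_def_of_pos h2l]
      apply Real.exp_le_exp.mpr
      have hlog1 : -(4 / (l:ℝ)) ≤ Real.log (1 - 2 / l) := by
        have h := Real.one_sub_inv_le_log_of_pos h2l
        have hinv : (1 - 2 / (l:ℝ))⁻¹ = (l:ℝ) / ((l:ℝ) - 2) := by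
          rw [inv_eq_one_div]
          rw [div_eq_div_iff (by linarith) (by linarith)]
          field_simp
        have hl2 : (l:ℝ) - 2 ≠ 0 := by linarith
        have hkey : 1 - (l:ℝ) / ((l:ℝ) - 2) = -(2 / ((l:ℝ) - 2)) := by
          field_simp
          ring
        have h2 : 2 / ((l:ℝ) - 2) ≤ 4 / (l:ℝ) := by
          rw [div_le_div_iff₀ (by linarith) hl0]
          linarith
        rw [hinv, hkey] at h
        linarith
      have hmul : -(4 / (l:ℝ)) * ((l:ℝ) - 1) ≤ Real.log (1 - 2 / l) * ((l:ℝ) - 1) :=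
        mul_le_mul_of_nonneg_right hlog1 (by linarith)
      have : (-4 : ℝ) ≤ -(4 / (l:ℝ)) * ((l:ℝ) - 1) := by
        rw [neg_mul, neg_le_neg_iff, div_mul_eq_mul_div, div_le_iff₀ hl0]
        nlinarith
      linarith
    have hD : Real.exp (-4) ≤ (1 - (1 - x) ^ p) ^ ((l:ℝ) - 1) := hD2.trans hD1
    -- bounded below
    have hbdd : BddBelow ((fun x : ℝ =>
        x / ((1 - (1 - x) ^ ((l : ℝ) / (1 - r) - 1)) ^ ((l : ℝ) - 1))) '' Set.Ioc 0 1) := by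
      refine ⟨0, ?_⟩
      rintro y ⟨z, ⟨hz0, hz1⟩, rfl⟩
      exact div_nonneg hz0.le (Real.rpow_nonneg
        (by have := Real.rpow_le_one (x := 1 - z) (by linarith) (by linarith) hp0; linarith) _)
    have hmem : x / ((1 - (1 - x) ^ ((l : ℝ) / (1 - r) - 1)) ^ ((l : ℝ) - 1)) ∈
        ((fun x : ℝ =>
          x / ((1 - (1 - x) ^ ((l : ℝ) / (1 - r) - 1)) ^ ((l : ℝ) - 1))) '' Set.Ioc 0 1) :=
      ⟨x, ⟨hx0, hx1⟩, rfl⟩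
    refine (csInf_le hbdd hmem).trans ?_
    have hfinal : x / ((1 - (1 - x) ^ p) ^ ((l:ℝ) - 1)) ≤ Real.exp 4 * a := by
      calc x / ((1 - (1 - x) ^ p) ^ ((l:ℝ) - 1)) ≤ x / Real.exp (-4) := by
            apply div_le_div_of_nonneg_left hx0.le (Real.exp_pos _) hD
      _ = x * Real.exp 4 := by rw [Real.exp_neg]; field_simp
      _ ≤ Real.exp 4 * a := by
            rw [mul_comm]
            exact mul_le_mul_of_nonneg_left hxa (Real.exp_pos 4).le
    simpa [hpdef, hc] using hfinal
end

section
/- Fix r ∈ (0,1), and for l ≥ 2 define ε_l(h) = (1 − (1 − h^{1/l})^{(r−1)/(l−r+1)}) / h^{(l−1)/l} for h ∈ (0,1). Then for each fixed h ∈ (0,1), ε_l(h) → 0 as l → ∞. -/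
open Filter

private lemma exit_aux (r : ℝ) (hr1 : r < 1) (c : ℝ) :
    Tendsto (fun l : ℕ => ((r - 1) / ((l : ℝ) - r + 1)) * (c - Real.log l))
      atTop (nhds 0) := by
  have hden : Tendsto (fun l : ℕ => (l : ℝ) - r + 1) atTop atTop := by
    have := tendsto_atTop_add_const_right atTop (1 - r)
      (tendsto_natCast_atTop_atTop (R := ℝ))
    refine this.congr fun l => by ring
  have term1 : Tendsto (fun l : ℕ => ((r - 1) * c) / ((l : ℝ) - r + 1))
      atTop (nhds 0) := tendsto_const_nhds.div_atTop hden
  have hfrac : Tendsto (fun l : ℕ => (l : ℝ) / ((l : ℝ) - r + 1)) atTop (nhds 1) := by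
    have h0 : Tendsto (fun l : ℕ => 1 + (r - 1) / ((l : ℝ) - r + 1)) atTop (nhds 1) := by
      have := tendsto_const_nhds.div_atTop (f := fun _ : ℕ => r - 1) hden
      simpa using (tendsto_const_nhds (x := (1:ℝ))).add this
    refine h0.congr' ?_
    filter_upwards [eventually_ge_atTop 1] with l hl
    have hl1 : (1 : ℝ) ≤ l := by exact_mod_cast hl
    have hdpos : (0 : ℝ) < (l : ℝ) - r + 1 := by linarith
    field_simp
    ring
  have inner : Tendsto (fun l : ℕ => Real.log l / ((l : ℝ) - r + 1)) atTop (nhds 0) := by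
    have := (Real.tendsto_pow_log_div_mul_add_atTop 1 (1 - r) 1 one_ne_zero).comp
      (tendsto_natCast_atTop_atTop (R := ℝ))
    refine this.congr fun l => ?_
    simp [Function.comp]
    ring_nf
  have term2 : Tendsto (fun l : ℕ => (r - 1) * (Real.log l / ((l : ℝ) - r + 1)))
      atTop (nhds 0) := by
    have := inner.const_mul (r - 1)
    simpa using this
  have := term1.sub term2
  rw [sub_zero] at this
  refine this.congr fun l => by ring

/-- The inverse parameterization of the BP EXIT curve of the
`(l, l/(1−r))`-regular LDPC ensemble,
`ε_l(h) = (1 − (1 − h^{1/l})^{(r−1)/(l−r+1)}) / h^{(l−1)/l}`,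
tends to `0` as `l → ∞`, for every fixed `h ∈ (0,1)`. -/
theorem regular_exit_inverse_tendsto_zero (r : ℝ) (hr : r ∈ Set.Ioo (0:ℝ) 1)
    (h : ℝ) (hh : h ∈ Set.Ioo (0:ℝ) 1) :
    Tendsto
      (fun l : ℕ =>
        (1 - (1 - h ^ ((1:ℝ) / l)) ^ ((r - 1) / ((l : ℝ) - r + 1))) /
          h ^ (((l : ℝ) - 1) / l))
      atTop (nhds 0) := by
  obtain ⟨hr0, hr1⟩ := hr
  obtain ⟨hh0, hh1⟩ := hh
  set L : ℝ := -Real.log h with hLdef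
  have hlogneg : Real.log h < 0 := Real.log_neg hh0 hh1
  have hL : 0 < L := by simp [hLdef]; linarith
  -- key facts for l ≥ 1
  have hfacts : ∀ᶠ l : ℕ in atTop,
      (0 < 1 - h ^ ((1:ℝ)/l)) ∧
      (L * h / l ≤ 1 - h ^ ((1:ℝ)/l)) ∧
      (1 - h ^ ((1:ℝ)/l) ≤ L / l) ∧
      ((r - 1) / ((l : ℝ) - r + 1) < 0) := by
    filter_upwards [eventually_ge_atTop 1] with l hl
    have hl1 : (1 : ℝ) ≤ l := by exact_mod_cast hl
    have hlpos : (0 : ℝ) < l := by linarith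
    set x : ℝ := h ^ ((1:ℝ)/l) with hxdef
    have hxpos : 0 < x := Real.rpow_pos_of_pos hh0 _
    have hx1 : x < 1 := Real.rpow_lt_one hh0.le hh1 (by positivity)
    have hexp : x = Real.exp ((1/l) * Real.log h) := by
      rw [hxdef, Real.rpow_def_of_pos hh0, mul_comm]
    have hupper : 1 - x ≤ L / l := by
      have h1 : (1/(l:ℝ)) * Real.log h + 1 ≤ x := by
        rw [hexp]; exact Real.add_one_le_exp _
      have : L / l = -((1/(l:ℝ)) * Real.log h) := by
        field_simp [hLdef]
        exact hLdef
      linarith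
    have hhx : h ≤ x := by
      have h2 : h ^ (1:ℝ) ≤ h ^ ((1:ℝ)/l) :=
        Real.rpow_le_rpow_of_exponent_ge hh0 hh1.le
          (by rw [div_le_one hlpos]; exact hl1)
      rw [Real.rpow_one] at h2
      exact h2
    have hlower : L * h / l ≤ 1 - x := by
      -- log (1/x) ≤ 1/x - 1, multiply by x
      have hinv : Real.log (1/x) ≤ 1/x - 1 :=
        Real.log_le_sub_one_of_pos (by positivity)
      have hlogx : Real.log (1/x) = -Real.log x := by
        rw [one_div, Real.log_inv]
      have hmul : x * (-Real.log x) ≤ x * (1/x - 1) := by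
        apply mul_le_mul_of_nonneg_left _ hxpos.le
        rw [← hlogx]; exact hinv
      have hx' : x * (1/x - 1) = 1 - x := by field_simp
      have hlx : -Real.log x = L / l := by
        rw [hxdef, Real.log_rpow hh0]
        field_simp [hLdef]
        exact hLdef.symm
      have step1 : x * (L / l) ≤ 1 - x := by
        rw [← hlx, ← hx']; exact hmul
      have step2 : L * h / l ≤ x * (L / l) := by
        have : h * (L / l) ≤ x * (L / l) :=
          mul_le_mul_of_nonneg_right hhx (by positivity)
        calc L * h / l = h * (L / l) := by ring
          _ ≤ x * (L / l) := this
      linarith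
    have hneg : (r - 1) / ((l : ℝ) - r + 1) < 0 :=
      div_neg_of_neg_of_pos (by linarith) (by linarith)
    exact ⟨by linarith, hlower, hupper, hneg⟩
  -- the exponent E l tends to 0
  have hE : Tendsto
      (fun l : ℕ => Real.log (1 - h ^ ((1:ℝ)/l)) * ((r - 1) / ((l : ℝ) - r + 1)))
      atTop (nhds 0) := by
    refine tendsto_of_tendsto_of_tendsto_of_le_of_le'
      (exit_aux r hr1 (Real.log L)) (exit_aux r hr1 (Real.log (L * h))) ?_ ?_
    · filter_upwards [hfacts, eventually_ge_atTop 1] with l ⟨hpos, hlow, hup, hneg⟩ hl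
      have hl1 : (1 : ℝ) ≤ l := by exact_mod_cast hl
      have hlpos : (0 : ℝ) < l := by linarith
      have hloglog : Real.log (1 - h ^ ((1:ℝ)/l)) ≤ Real.log L - Real.log l := by
        have := Real.log_le_log hpos hup
        rwa [Real.log_div (by positivity) (by positivity)] at this
      calc ((r - 1) / ((l : ℝ) - r + 1)) * (Real.log L - Real.log l)
          ≤ ((r - 1) / ((l : ℝ) - r + 1)) * Real.log (1 - h ^ ((1:ℝ)/l)) :=
            mul_le_mul_of_nonpos_left hloglog hneg.le
        _ = Real.log (1 - h ^ ((1:ℝ)/l)) * ((r - 1) / ((l : ℝ) - r + 1)) := by ring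
    · filter_upwards [hfacts, eventually_ge_atTop 1] with l ⟨hpos, hlow, hup, hneg⟩ hl
      have hl1 : (1 : ℝ) ≤ l := by exact_mod_cast hl
      have hlpos : (0 : ℝ) < l := by linarith
      have hloglog : Real.log (L * h) - Real.log l ≤ Real.log (1 - h ^ ((1:ℝ)/l)) := by
        have := Real.log_le_log (by positivity) hlow
        rwa [Real.log_div (by positivity) (by positivity)] at this
      calc Real.log (1 - h ^ ((1:ℝ)/l)) * ((r - 1) / ((l : ℝ) - r + 1))
          = ((r - 1) / ((l : ℝ) - r + 1)) * Real.log (1 - h ^ ((1:ℝ)/l)) := by ring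
        _ ≤ ((r - 1) / ((l : ℝ) - r + 1)) * (Real.log (L * h) - Real.log l) :=
            mul_le_mul_of_nonpos_left hloglog hneg.le
  -- numerator tends to 0
  have hnum : Tendsto
      (fun l : ℕ => 1 - (1 - h ^ ((1:ℝ)/l)) ^ ((r - 1) / ((l : ℝ) - r + 1)))
      atTop (nhds 0) := by
    have hexp : Tendsto
        (fun l : ℕ => Real.exp (Real.log (1 - h ^ ((1:ℝ)/l)) * ((r - 1) / ((l : ℝ) - r + 1))))
        atTop (nhds 1) := by
      have := (Real.continuous_exp.tendsto 0).comp hE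
      simpa [Function.comp_def] using this
    have : Tendsto
        (fun l : ℕ => 1 - Real.exp (Real.log (1 - h ^ ((1:ℝ)/l)) * ((r - 1) / ((l : ℝ) - r + 1))))
        atTop (nhds 0) := by
      have := (tendsto_const_nhds (x := (1:ℝ))).sub hexp
      simpa using this
    refine this.congr' ?_
    filter_upwards [hfacts] with l ⟨hpos, _, _, _⟩
    rw [Real.rpow_def_of_pos hpos]
  -- denominator tends to h
  have hden : Tendsto (fun l : ℕ => h ^ (((l : ℝ) - 1) / l)) atTop (nhds h) := by
    have hexpo : Tendsto (fun l : ℕ => ((l : ℝ) - 1) / l) atTop (nhds 1) := by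
      have h1 : Tendsto (fun l : ℕ => 1 - 1 / (l : ℝ)) atTop (nhds 1) := by
        have := (tendsto_const_nhds (x := (1:ℝ))).sub tendsto_one_div_atTop_nhds_zero_nat
        simpa using this
      refine h1.congr' ?_
      filter_upwards [eventually_ge_atTop 1] with l hl
      have hl1 : (1 : ℝ) ≤ l := by exact_mod_cast hl
      have : (l : ℝ) ≠ 0 := by linarith
      field_simp
    have := (tendsto_const_nhds (x := h)).rpow hexpo (Or.inl (ne_of_gt hh0))
    simpa using this
  have := hnum.div hden (ne_of_gt hh0)
  rw [zero_div] at this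
  exact this
end

section
/- Let Ψ_Ξ(u) be defined for u ≥ 0 by Ψ_Ξ(u) = −Λ'(1)·log₂[(1+u·v)/((1+u)(1+v))] + Σ_d Λ_d·log₂[(1+u^d)/(2(1+u)^d)] + (Λ'(1)/Γ'(1))·Σ_k Γ_k·log₂[1 + ((1−v)/(1+v))^k], where v = v(u) satisfies v(1/u) = 1/v(u). Then Ψ_Ξ(1) = 0, and Ψ_Ξ attains its maximum over [0,∞) at some point in [0,1]; in fact Ψ_Ξ(1/u) ≥ Ψ_Ξ(u) for every u > 1. -/
open Finset

/-- Edge-perspective coefficients `λ_d = d·Λ_d / Λ'(1)`. -/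
noncomputable def edgeCoeff (N : ℕ) (Lc : ℕ → ℝ) (d : ℕ) : ℝ :=
  d * Lc d / (∑ e ∈ Finset.range N, (e : ℝ) * Lc e)

/-- `v(u) = (Σ_d λ_d u^{d−1}/(1+u^d)) / (Σ_d λ_d/(1+u^d))`. -/
noncomputable def vFun (N : ℕ) (Lc : ℕ → ℝ) (u : ℝ) : ℝ :=
  (∑ d ∈ Finset.range N, edgeCoeff N Lc d * u ^ (d - 1) / (1 + u ^ d)) /
    (∑ d ∈ Finset.range N, edgeCoeff N Lc d / (1 + u ^ d))

/-- The weight-enumerator exponent function `Ψ_Ξ(u)` of an LDPC ensemble with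
node-perspective degree distributions `Λ` (variables) and `Γ` (checks). -/
noncomputable def Psi (N K : ℕ) (Lc Gc : ℕ → ℝ) (u : ℝ) : ℝ :=
  -(∑ d ∈ Finset.range N, (d : ℝ) * Lc d) *
      Real.logb 2 ((1 + u * vFun N Lc u) / ((1 + u) * (1 + vFun N Lc u))) +
    (∑ d ∈ Finset.range N, Lc d * Real.logb 2 ((1 + u ^ d) / (2 * (1 + u) ^ d))) +
    ((∑ d ∈ Finset.range N, (d : ℝ) * Lc d) / (∑ k ∈ Finset.range K, (k : ℝ) * Gc k)) *
      ∑ k ∈ Finset.range K, Gc k *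
        Real.logb 2 (1 + ((1 - vFun N Lc u) / (1 + vFun N Lc u)) ^ k)

private lemma neg_one_lt_pow_aux {r : ℝ} (h1 : -1 < r) (h2 : r ≤ 1) (k : ℕ) :
    -1 < r ^ k := by
  rcases Nat.eq_zero_or_pos k with hk | hk
  · simp [hk]
  rcases le_or_gt 0 r with hr | hr
  · have := pow_nonneg hr k; linarith
  · have habs : |r| < 1 := abs_lt.2 ⟨h1, by linarith⟩
    have h3 : |r ^ k| < 1 := by
      rw [abs_pow]; exact pow_lt_one₀ (abs_nonneg r) habs hk.ne'
    exact (abs_lt.mp h3).1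

private lemma sum_mul_pos_aux {n : ℕ} {f : ℕ → ℝ} (hf : ∀ d, 0 ≤ f d) (h0 : f 0 = 0)
    (hsum : ∑ d ∈ Finset.range n, f d = 1) :
    0 < ∑ d ∈ Finset.range n, (d : ℝ) * f d := by
  have h : ∑ d ∈ Finset.range n, f d ≤ ∑ d ∈ Finset.range n, (d : ℝ) * f d := by
    apply Finset.sum_le_sum
    intro d _
    rcases Nat.eq_zero_or_pos d with hd | hd
    · simp [hd, h0]
    · have hd1 : (1 : ℝ) ≤ d := by exact_mod_cast hd
      nlinarith [hf d]
  linarith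

section Vlemmas

variable {N : ℕ} {Lc : ℕ → ℝ}

private lemma edge_nonneg (hL : ∀ d, 0 ≤ Lc d) (hL0 : Lc 0 = 0)
    (hLsum : ∑ d ∈ Finset.range N, Lc d = 1) (d : ℕ) : 0 ≤ edgeCoeff N Lc d :=
  div_nonneg (mul_nonneg (Nat.cast_nonneg d) (hL d)) (sum_mul_pos_aux hL hL0 hLsum).le

private lemma edge_sum (hL : ∀ d, 0 ≤ Lc d) (hL0 : Lc 0 = 0)
    (hLsum : ∑ d ∈ Finset.range N, Lc d = 1) :
    ∑ d ∈ Finset.range N, edgeCoeff N Lc d = 1 := by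
  have h := sum_mul_pos_aux hL hL0 hLsum
  simp only [edgeCoeff]
  rw [← Finset.sum_div]
  exact div_self h.ne'

private lemma den_pos (hL : ∀ d, 0 ≤ Lc d) (hL0 : Lc 0 = 0)
    (hLsum : ∑ d ∈ Finset.range N, Lc d = 1) {u : ℝ} (hu : 0 ≤ u) :
    0 < ∑ d ∈ Finset.range N, edgeCoeff N Lc d / (1 + u ^ d) := by
  have hterm : ∀ d ∈ Finset.range N, 0 ≤ edgeCoeff N Lc d / (1 + u ^ d) := fun d _ =>
    div_nonneg (edge_nonneg hL hL0 hLsum d)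
      (by have := pow_nonneg hu d; linarith)
  obtain ⟨d₀, hd₀, hpos⟩ : ∃ d ∈ Finset.range N, (0:ℝ) < edgeCoeff N Lc d := by
    by_contra hcon
    push_neg at hcon
    have h := Finset.sum_nonpos hcon
    rw [edge_sum hL hL0 hLsum] at h
    linarith
  have h1 : (0:ℝ) < edgeCoeff N Lc d₀ / (1 + u ^ d₀) :=
    div_pos hpos (by have := pow_nonneg hu d₀; linarith)
  exact lt_of_lt_of_le h1 (Finset.single_le_sum hterm hd₀)

private lemma num_nonneg (hL : ∀ d, 0 ≤ Lc d) (hL0 : Lc 0 = 0)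
    (hLsum : ∑ d ∈ Finset.range N, Lc d = 1) {u : ℝ} (hu : 0 ≤ u) :
    0 ≤ ∑ d ∈ Finset.range N, edgeCoeff N Lc d * u ^ (d - 1) / (1 + u ^ d) :=
  Finset.sum_nonneg fun d _ =>
    div_nonneg (mul_nonneg (edge_nonneg hL hL0 hLsum d) (pow_nonneg hu _))
      (by have := pow_nonneg hu d; linarith)

private lemma den_le_num (hL : ∀ d, 0 ≤ Lc d) (hL0 : Lc 0 = 0)
    (hLsum : ∑ d ∈ Finset.range N, Lc d = 1) {u : ℝ} (hu : 1 ≤ u) :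
    ∑ d ∈ Finset.range N, edgeCoeff N Lc d / (1 + u ^ d)
      ≤ ∑ d ∈ Finset.range N, edgeCoeff N Lc d * u ^ (d - 1) / (1 + u ^ d) := by
  apply Finset.sum_le_sum
  intro d _
  have hp : (0:ℝ) < 1 + u ^ d := by have := pow_nonneg (by linarith : (0:ℝ) ≤ u) d; linarith
  have h1 : (1:ℝ) ≤ u ^ (d - 1) := one_le_pow₀ hu
  have h2 : edgeCoeff N Lc d ≤ edgeCoeff N Lc d * u ^ (d - 1) :=
    le_mul_of_one_le_right (edge_nonneg hL hL0 hLsum d) h1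
  exact div_le_div_of_nonneg_right h2 hp.le

private lemma vFun_nonneg (hL : ∀ d, 0 ≤ Lc d) (hL0 : Lc 0 = 0)
    (hLsum : ∑ d ∈ Finset.range N, Lc d = 1) {u : ℝ} (hu : 0 ≤ u) :
    0 ≤ vFun N Lc u :=
  div_nonneg (num_nonneg hL hL0 hLsum hu) (den_pos hL hL0 hLsum hu).le

private lemma one_le_vFun (hL : ∀ d, 0 ≤ Lc d) (hL0 : Lc 0 = 0)
    (hLsum : ∑ d ∈ Finset.range N, Lc d = 1) {u : ℝ} (hu : 1 ≤ u) :
    1 ≤ vFun N Lc u := by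
  rw [vFun, le_div_iff₀ (den_pos hL hL0 hLsum (by linarith)), one_mul]
  exact den_le_num hL hL0 hLsum hu

private lemma vFun_one (hL : ∀ d, 0 ≤ Lc d) (hL0 : Lc 0 = 0)
    (hLsum : ∑ d ∈ Finset.range N, Lc d = 1) :
    vFun N Lc 1 = 1 := by
  have hden := den_pos hL hL0 hLsum (u := 1) zero_le_one
  rw [vFun]
  have h : (∑ d ∈ Finset.range N, edgeCoeff N Lc d * (1:ℝ) ^ (d - 1) / (1 + 1 ^ d))
      = ∑ d ∈ Finset.range N, edgeCoeff N Lc d / (1 + (1:ℝ) ^ d) := by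
    apply Finset.sum_congr rfl
    intro d _
    rw [one_pow, mul_one]
  rw [h]
  exact div_self hden.ne'

private lemma vFun_inv (hL : ∀ d, 0 ≤ Lc d) (hL0 : Lc 0 = 0)
    (hLsum : ∑ d ∈ Finset.range N, Lc d = 1) {u : ℝ} (hu : 1 < u) :
    vFun N Lc (1/u) = (vFun N Lc u)⁻¹ := by
  have hu0 : (0:ℝ) < u := by linarith
  have hu0' : u ≠ 0 := hu0.ne'
  have key1 : ∀ d ∈ Finset.range N, edgeCoeff N Lc d * (1/u) ^ (d - 1) / (1 + (1/u) ^ d)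
      = u * (edgeCoeff N Lc d / (1 + u ^ d)) := by
    intro d _
    rcases d with _ | m
    · simp [edgeCoeff]
    · have hpow : (u:ℝ) ^ (m+1) ≠ 0 := pow_ne_zero _ hu0'
      have hden : (1:ℝ) + u ^ (m+1) ≠ 0 := by positivity
      have hden' : (1:ℝ) + (1/u) ^ (m+1) ≠ 0 := by positivity
      simp only [Nat.add_sub_cancel]
      field_simp
      have hi : u * u⁻¹ = 1 := mul_inv_cancel₀ hu0'
      have hm : u ^ m * u⁻¹ ^ m = 1 := by rw [← mul_pow, hi, one_pow]
      linear_combination (edgeCoeff N Lc (m + 1) * u) * hm - (edgeCoeff N Lc (m + 1) * u⁻¹ ^ m) * hi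
  have key2 : ∀ d ∈ Finset.range N, edgeCoeff N Lc d / (1 + (1/u) ^ d)
      = u * (edgeCoeff N Lc d * u ^ (d - 1) / (1 + u ^ d)) := by
    intro d _
    rcases d with _ | m
    · simp [edgeCoeff]
    · have hden : (1:ℝ) + u ^ (m+1) ≠ 0 := by positivity
      have hden' : (1:ℝ) + (1/u) ^ (m+1) ≠ 0 := by positivity
      simp only [Nat.add_sub_cancel]
      field_simp
      have hi : u * u⁻¹ = 1 := mul_inv_cancel₀ hu0'
      have hm : u ^ m * u⁻¹ ^ m = 1 := by rw [← mul_pow, hi, one_pow]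
      linear_combination (-(edgeCoeff N Lc (m + 1)) * u ^ m * u⁻¹ ^ m) * hi - (edgeCoeff N Lc (m + 1)) * hm
  have e1 : (∑ d ∈ Finset.range N, edgeCoeff N Lc d * (1/u) ^ (d - 1) / (1 + (1/u) ^ d))
      = u * ∑ d ∈ Finset.range N, edgeCoeff N Lc d / (1 + u ^ d) := by
    rw [Finset.mul_sum]; exact Finset.sum_congr rfl key1
  have e2 : (∑ d ∈ Finset.range N, edgeCoeff N Lc d / (1 + (1/u) ^ d))
      = u * ∑ d ∈ Finset.range N, edgeCoeff N Lc d * u ^ (d - 1) / (1 + u ^ d) := by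
    rw [Finset.mul_sum]; exact Finset.sum_congr rfl key2
  rw [vFun, vFun, e1, e2, inv_div, mul_div_mul_left _ _ hu0']

end Vlemmas

/-- `Ψ_Ξ(1) = 0`, `Ψ_Ξ(1/u) ≥ Ψ_Ξ(u)` for every `u > 1`, and `Ψ_Ξ` attains its
maximum over `[0,∞)` at some point of `[0,1]`. -/
theorem psi_max_in_unit_interval (N K : ℕ) (Lc Gc : ℕ → ℝ)
    (hL : ∀ d, 0 ≤ Lc d) (hG : ∀ k, 0 ≤ Gc k)
    (hL0 : Lc 0 = 0) (hG0 : Gc 0 = 0)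
    (hLsum : ∑ d ∈ Finset.range N, Lc d = 1)
    (hGsum : ∑ k ∈ Finset.range K, Gc k = 1) :
    Psi N K Lc Gc 1 = 0 ∧
    (∀ u : ℝ, 1 < u → Psi N K Lc Gc u ≤ Psi N K Lc Gc (1 / u)) ∧
    ∃ u₀ ∈ Set.Icc (0:ℝ) 1, ∀ u : ℝ, 0 ≤ u → Psi N K Lc Gc u ≤ Psi N K Lc Gc u₀ := by
  have hcoef : 0 ≤ (∑ d ∈ Finset.range N, (d : ℝ) * Lc d) / (∑ k ∈ Finset.range K, (k : ℝ) * Gc k) :=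
    div_nonneg (sum_mul_pos_aux hL hL0 hLsum).le (sum_mul_pos_aux hG hG0 hGsum).le
  -- Part 1 : Psi 1 = 0
  have part1 : Psi N K Lc Gc 1 = 0 := by
    rw [Psi, vFun_one hL hL0 hLsum]
    have e1 : ((1:ℝ) + 1 * 1) / ((1 + 1) * (1 + 1)) = 2⁻¹ := by norm_num
    rw [e1, Real.logb_inv, Real.logb_self_eq_one one_lt_two]
    have e2 : (∑ d ∈ Finset.range N, Lc d * Real.logb 2 ((1 + (1:ℝ) ^ d) / (2 * (1 + 1) ^ d)))
        = -∑ d ∈ Finset.range N, (d : ℝ) * Lc d := by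
      rw [← Finset.sum_neg_distrib]
      apply Finset.sum_congr rfl
      intro d _
      have ha : ((1:ℝ) + 1 ^ d) / (2 * (1 + 1) ^ d) = ((2:ℝ) ^ d)⁻¹ := by
        rw [one_pow, show ((1:ℝ)+1) = 2 by norm_num, eq_comm, inv_eq_iff_eq_inv, inv_div]
        field_simp
      rw [ha, Real.logb_inv, Real.logb_pow, Real.logb_self_eq_one one_lt_two]
      ring
    rw [e2]
    have e3 : (∑ k ∈ Finset.range K, Gc k *
        Real.logb 2 (1 + (((1:ℝ) - 1) / (1 + 1)) ^ k)) = 0 := by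
      apply Finset.sum_eq_zero
      intro k _
      have : ((1:ℝ) - 1) / (1 + 1) = 0 := by norm_num
      rw [this]
      rcases k with _ | m
      · rw [hG0]; ring
      · rw [zero_pow (Nat.succ_ne_zero m), add_zero, Real.logb_one, mul_zero]
    rw [e3]
    ring
  -- Part 2 : Psi u ≤ Psi (1/u) for u > 1
  have part2 : ∀ u : ℝ, 1 < u → Psi N K Lc Gc u ≤ Psi N K Lc Gc (1 / u) := by
    intro u hu
    have hu0 : (0:ℝ) < u := by linarith
    set v := vFun N Lc u with hvdef
    have hv1 : 1 ≤ v := one_le_vFun hL hL0 hLsum hu.le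
    have hv0 : (0:ℝ) < v := by linarith
    have hvne : v ≠ 0 := hv0.ne'
    have h1u : (1:ℝ) + u ≠ 0 := by positivity
    have h1v : (1:ℝ) + v ≠ 0 := by positivity
    rw [Psi, Psi, vFun_inv hL hL0 hLsum hu, ← hvdef]
    have eA : (1 + 1 / u * v⁻¹) / ((1 + 1 / u) * (1 + v⁻¹))
        = (1 + u * v) / ((1 + u) * (1 + v)) := by
      field_simp
      ring
    rw [eA]
    have eB : (∑ d ∈ Finset.range N, Lc d * Real.logb 2 ((1 + (1/u) ^ d) / (2 * (1 + 1/u) ^ d)))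
        = ∑ d ∈ Finset.range N, Lc d * Real.logb 2 ((1 + u ^ d) / (2 * (1 + u) ^ d)) := by
      apply Finset.sum_congr rfl
      intro d _
      have hb : ((1:ℝ) + (1/u) ^ d) / (2 * (1 + 1/u) ^ d) = (1 + u ^ d) / (2 * (1 + u) ^ d) := by
        have hud : (u:ℝ) ^ d ≠ 0 := pow_ne_zero _ hu0.ne'
        have h1ud : ((1:ℝ) + u) ^ d ≠ 0 := pow_ne_zero _ h1u
        field_simp
        have hq : 1 / u ^ d * u ^ d = 1 := one_div_mul_cancel hud
        rw [one_div_pow, div_pow, add_comm u 1, div_mul_eq_mul_div, eq_div_iff hud]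
        linear_combination ((1 + u) ^ d) * hq
      rw [hb]
    rw [eB]
    have eC : (1 - v⁻¹) / (1 + v⁻¹) = -((1 - v) / (1 + v)) := by
      rw [neg_div', neg_sub]
      rw [div_eq_div_iff (by positivity) (show ((1:ℝ) + v) ≠ 0 by positivity)]
      field_simp
      ring_nf
    rw [eC]
    apply add_le_add_right
    apply mul_le_mul_of_nonneg_left _ hcoef
    apply Finset.sum_le_sum
    intro k _
    apply mul_le_mul_of_nonneg_left _ (hG k)
    set s := (1 - v) / (1 + v) with hs
    have h1vpos : (0:ℝ) < 1 + v := by linarith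
    have hs1 : s ≤ 1 := by
      rw [hs, div_le_one h1vpos]; linarith
    have hsneg1 : -1 < s := by
      rw [hs, lt_div_iff₀ h1vpos]; linarith
    have hpos1 : (0:ℝ) < 1 + s ^ k := by
      have := neg_one_lt_pow_aux hsneg1 hs1 k
      linarith
    have hsle : s ^ k ≤ (-s) ^ k := by
      have h1 : s ^ k ≤ |s ^ k| := le_abs_self _
      have h2 : |s ^ k| = (-s) ^ k := by
        rw [abs_pow]
        congr 1
        rw [abs_of_nonpos]
        rw [hs]
        apply div_nonpos_of_nonpos_of_nonneg <;> linarith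
      linarith
    have hpos2 : (0:ℝ) < 1 + (-s) ^ k := by linarith
    exact (Real.logb_le_logb one_lt_two hpos1 hpos2).mpr (by linarith)
  refine ⟨part1, part2, ?_⟩
  -- Part 3 : continuity on [0,1] and the maximum
  set I : Set ℝ := Set.Icc 0 1 with hI
  have hv_cont : ContinuousOn (vFun N Lc) I := by
    apply ContinuousOn.div
    · apply continuousOn_finset_sum
      intro d _
      exact ((continuous_const.mul (continuous_pow _)).continuousOn).div
        ((continuous_const.add (continuous_pow d)).continuousOn)
        (fun x hx => by have := pow_nonneg hx.1 d; intro h; linarith [h.symm.le])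
    · apply continuousOn_finset_sum
      intro d _
      exact (continuousOn_const).div
        ((continuous_const.add (continuous_pow d)).continuousOn)
        (fun x hx => by have := pow_nonneg hx.1 d; intro h; linarith [h.symm.le])
    · exact fun x hx => (den_pos hL hL0 hLsum hx.1).ne'
  have hlogb : ∀ {f : ℝ → ℝ}, ContinuousOn f I → (∀ x ∈ I, 0 < f x) →
      ContinuousOn (fun x => Real.logb 2 (f x)) I := by
    intro f hf hpos
    have he : (fun x => Real.logb 2 (f x)) = fun x => Real.log (f x) / Real.log 2 := rfl
    rw [he]
    exact (hf.log (fun x hx => (hpos x hx).ne')).div_const _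
  have hvpos : ∀ x ∈ I, 0 ≤ vFun N Lc x := fun x hx => vFun_nonneg hL hL0 hLsum hx.1
  have hcont : ContinuousOn (Psi N K Lc Gc) I := by
    unfold Psi
    apply ContinuousOn.add
    apply ContinuousOn.add
    · apply continuousOn_const.mul
      apply hlogb
      · apply ContinuousOn.div
        · exact continuousOn_const.add (continuous_id.continuousOn.mul hv_cont)
        · exact (continuousOn_const.add continuous_id.continuousOn).mul
            (continuousOn_const.add hv_cont)
        · intro x hx
          have h1 := hvpos x hx
          have h2 := hx.1
          positivity
      · intro x hx
        have h1 := hvpos x hx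
        have h2 := hx.1
        have hnum : (0:ℝ) < 1 + x * vFun N Lc x := by nlinarith
        have hden : (0:ℝ) < (1 + x) * (1 + vFun N Lc x) := by nlinarith
        positivity
    · apply continuousOn_finset_sum
      intro d _
      apply continuousOn_const.mul
      apply hlogb
      · apply ContinuousOn.div
        · exact continuousOn_const.add (continuous_pow d).continuousOn
        · exact (continuous_const.mul ((continuous_const.add continuous_id).pow d)).continuousOn
        · intro x hx
          have h2 := hx.1
          positivity
      · intro x hx
        have h2 := hx.1
        have h3 := pow_nonneg h2 d
        positivity
    · apply continuousOn_const.mul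
      apply continuousOn_finset_sum
      intro k _
      apply continuousOn_const.mul
      have hscont : ContinuousOn (fun x => (1 - vFun N Lc x) / (1 + vFun N Lc x)) I := by
        apply ContinuousOn.div
        · exact continuousOn_const.sub hv_cont
        · exact continuousOn_const.add hv_cont
        · intro x hx
          have h1 := hvpos x hx
          positivity
      apply hlogb
      · exact continuousOn_const.add (hscont.pow k)
      · intro x hx
        have h1 := hvpos x hx
        have h1v : (0:ℝ) < 1 + vFun N Lc x := by linarith
        have hs1 : (1 - vFun N Lc x) / (1 + vFun N Lc x) ≤ 1 := by
          rw [div_le_one h1v]; linarith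
        have hsneg1 : -1 < (1 - vFun N Lc x) / (1 + vFun N Lc x) := by
          rw [lt_div_iff₀ h1v]; linarith
        have := neg_one_lt_pow_aux hsneg1 hs1 k
        linarith
  obtain ⟨u₀, hu₀, hmax⟩ := isCompact_Icc.exists_isMaxOn
    (Set.nonempty_Icc.2 zero_le_one) hcont
  refine ⟨u₀, hu₀, ?_⟩
  intro u hu
  rcases le_or_gt u 1 with h | h
  · exact isMaxOn_iff.mp hmax u ⟨hu, h⟩
  · have h2 := part2 u h
    have hmem : (1/u) ∈ I := ⟨by positivity, by rw [div_le_one (by linarith)]; linarith⟩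
    exact h2.trans (isMaxOn_iff.mp hmax _ hmem)
end
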